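/- Let q be a prime power and let L(X) = a_1 X^q + a_0 X with a_0, a_1 ∈ F_{q^2}. Then Tr_{q^2/q}(L(x)/x) ≠ 0 for every nonzero x ∈ F_{q^2} if and only if the polynomial g(X) = X^2 + Tr_{q^2/q}(a_0)·X + a_1^{q+1} ∈ F_q[X] has two distinct roots in F_q. -/

import Mathlib

open Polynomial

lemma aux_pow_surj {E : Type*} [Field E] [Fintype E] {q : ℕ} (hq2 : 2 ≤ q)
    (hE : Fintype.card E = q ^ 2) {u : E} (hu : u ^ (q + 1) = 1) :
    ∃ x : E, x ≠ 0 ∧ x ^ (q - 1) = u := by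
  classical
  have hu0 : u ≠ 0 := by
    intro h; rw [h, zero_pow (by omega)] at hu; exact one_ne_zero hu.symm
  obtain ⟨γ, hγ⟩ := IsCyclic.exists_generator (α := Eˣ)
  have hord : orderOf γ = q ^ 2 - 1 := by
    rw [orderOf_eq_card_of_forall_mem_zpowers hγ, Nat.card_eq_fintype_card,
      Fintype.card_units, hE]
  obtain ⟨m, hm⟩ := hγ (Units.mk0 u hu0)
  simp only at hm
  have hm1 : γ ^ (m * ((q : ℤ) + 1)) = 1 := by
    have h0 : (Units.mk0 u hu0) ^ (q + 1) = 1 := Units.ext (by simp [hu])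
    have h2 : ((q : ℤ) + 1) = ((q + 1 : ℕ) : ℤ) := by push_cast; ring
    rw [zpow_mul, hm, h2, zpow_natCast, h0]
  have hdvd : ((q ^ 2 - 1 : ℕ) : ℤ) ∣ m * ((q : ℤ) + 1) := by
    rw [← hord]
    exact orderOf_dvd_iff_zpow_eq_one.mpr hm1
  have hcast : ((q ^ 2 - 1 : ℕ) : ℤ) = ((q : ℤ) + 1) * ((q : ℤ) - 1) := by
    have h1 : (1 : ℕ) ≤ q ^ 2 := by nlinarith
    push_cast [Nat.cast_sub h1]
    ring
  have hdvd2 : ((q : ℤ) - 1) ∣ m := by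
    have h1 : ((q : ℤ) + 1) * ((q : ℤ) - 1) ∣ ((q : ℤ) + 1) * m := by
      rw [← hcast]
      convert hdvd using 1
      ring
    have hne : ((q : ℤ) + 1) ≠ 0 := by positivity
    exact (mul_dvd_mul_iff_left hne).mp h1
  obtain ⟨t, ht⟩ := hdvd2
  refine ⟨((γ ^ t : Eˣ) : E), Units.ne_zero _, ?_⟩
  have key : (γ ^ t) ^ ((q - 1 : ℕ) : ℤ) = Units.mk0 u hu0 := by
    rw [← hm, ht, ← zpow_mul]
    congr 1
    have h3 : ((q - 1 : ℕ) : ℤ) = (q : ℤ) - 1 := by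
      have : (1:ℕ) ≤ q := by omega
      push_cast [Nat.cast_sub this]
      ring
    rw [h3]; ring
  calc ((γ ^ t : Eˣ) : E) ^ (q - 1) = (((γ ^ t) ^ (q - 1) : Eˣ) : E) := by
        rw [Units.val_pow_eq_pow_val]
      _ = u := by rw [← zpow_natCast, key]; rfl

lemma aux_card_fixed {E : Type*} [Field E] [Fintype E] {p k q : ℕ} (hp : p.Prime)
    (hk : 0 < k) (hqpk : q = p ^ k) [CharP E p] (hE : Fintype.card E = q ^ 2) :
    Nat.card {x : E // x ^ q = x} = q := by
  classical
  have hq2 : 2 ≤ q := by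
    rw [hqpk]
    calc 2 ≤ p := hp.two_le
      _ = p ^ 1 := (pow_one p).symm
      _ ≤ p ^ k := Nat.pow_le_pow_right hp.pos hk
  haveI := Fact.mk hp
  set P : E[X] := X ^ q - X with hP
  set Q : E[X] := X ^ (q ^ 2) - X with hQ
  have hQne : Q ≠ 0 := FiniteField.X_pow_card_sub_X_ne_zero E (by nlinarith)
  have hPne : P ≠ 0 := FiniteField.X_pow_card_sub_X_ne_zero E hq2
  have hPdvd : P ∣ Q := by
    have hfrob : P ^ q = X ^ (q ^ 2) - X ^ q := by
      rw [hP, hqpk, sub_pow_char_pow, ← pow_mul, ← pow_mul, ← pow_add]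
      congr 2
      ring
    have : Q = P ^ q + P := by
      rw [hfrob, hP, hQ]; ring
    rw [this]
    exact dvd_add (dvd_pow_self P (by omega)) dvd_rfl
  have hQroots : Q.roots = Finset.univ.val := by
    have := FiniteField.roots_X_pow_card_sub_X E
    rwa [hE] at this
  have hQsplits : Q.Splits := by
    rw [splits_iff_card_roots, hQroots, ← Finset.card_def, Finset.card_univ, hE,
      FiniteField.X_pow_card_sub_X_natDegree_eq E (by nlinarith)]
  have hPsplits : P.Splits :=
    Splits.of_dvd hQsplits hQne hPdvd
  have hProotscard : P.roots.card = q := by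
    rw [splits_iff_card_roots.mp hPsplits,
      FiniteField.X_pow_card_sub_X_natDegree_eq E hq2]
  have hnodup : P.roots.Nodup := by
    have hle := Polynomial.roots.le_of_dvd hQne hPdvd
    have : Q.roots.Nodup := by rw [hQroots]; exact Finset.univ.nodup
    exact Multiset.nodup_of_le hle this
  have hmem : ∀ x : E, x ∈ P.roots.toFinset ↔ x ^ q = x := by
    intro x
    rw [Multiset.mem_toFinset, mem_roots hPne, IsRoot.def, hP, eval_sub, eval_pow,
      eval_X, sub_eq_zero]
  rw [Nat.card_eq_fintype_card, Fintype.card_of_subtype P.roots.toFinset hmem,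
    Multiset.toFinset_card_of_nodup hnodup, hProotscard]

lemma aux_quad_root {E : Type*} [Field E] [Fintype E] {p k q : ℕ} (hp : p.Prime)
    (hk : 0 < k) (hqpk : q = p ^ k) [CharP E p] (hE : Fintype.card E = q ^ 2)
    {b c : E} (hb : b ^ q = b) (hc : c ^ q = c) :
    ∃ z : E, z ^ 2 + b * z + c = 0 := by
  classical
  haveI := Fact.mk hp
  have hq2 : 2 ≤ q := by
    rw [hqpk]
    calc 2 ≤ p := hp.two_le
      _ = p ^ 1 := (pow_one p).symm
      _ ≤ p ^ k := Nat.pow_le_pow_right hp.pos hk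
  let F : Subfield E :=
    { carrier := {x | x ^ q = x}
      mul_mem' := by
        intro x y hx hy
        simp only [Set.mem_setOf_eq] at *
        rw [mul_pow, hx, hy]
      one_mem' := one_pow q
      add_mem' := by
        intro x y hx hy
        simp only [Set.mem_setOf_eq] at *
        rw [hqpk] at *
        rw [add_pow_char_pow, hx, hy]
      zero_mem' := zero_pow (by omega)
      neg_mem' := by
        intro x hx
        simp only [Set.mem_setOf_eq] at *
        have h0 : (0 - x) ^ q = 0 ^ q - x ^ q := by
          rw [hqpk]; exact sub_pow_char_pow 0 x k
        simpa [zero_pow (show q ≠ 0 by omega), hx] using h0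
      inv_mem' := by
        intro x hx
        simp only [Set.mem_setOf_eq] at *
        rw [inv_pow, hx] }
  have hmemF : ∀ x : E, x ∈ F ↔ x ^ q = x := fun x => Iff.rfl
  letI : Fintype F := Fintype.ofFinite F
  have hcardF : Fintype.card F = q := by
    have h := aux_card_fixed (E := E) hp hk hqpk hE
    rw [← Nat.card_eq_fintype_card]
    exact (Nat.card_congr (Equiv.subtypeEquivRight hmemF)).trans h
  set b' : F := ⟨b, hb⟩ with hb'
  set c' : F := ⟨c, hc⟩ with hc'
  set g : F[X] := X ^ 2 + (C b' * X + C c') with hg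
  have hgmonic : g.Monic := by
    apply monic_X_pow_add
    calc (C b' * X + C c').degree ≤ max (C b' * X).degree (C c').degree := degree_add_le _ _
      _ ≤ max 1 0 := max_le_max (degree_C_mul_X_le b') degree_C_le
      _ < 2 := by norm_num
  have hgdeg : g.natDegree = 2 := by
    have h1 : g = C 1 * X ^ 2 + C b' * X + C c' := by rw [hg, map_one, one_mul, add_assoc]
    rw [h1]
    exact natDegree_quadratic one_ne_zero
  by_cases hroot : ∃ r : F, g.eval r = 0
  · obtain ⟨r, hr⟩ := hroot
    refine ⟨(r : E), ?_⟩
    have h2 : r ^ 2 + b' * r + c' = 0 := by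
      rw [← hr, hg]
      simp [eval_add, eval_mul, eval_pow]
      ring
    have h3 := congrArg (algebraMap F E) h2
    push_cast at h3
    convert h3 using 2
    rfl
    rfl
  · have hgroots : g.roots = 0 := by
      by_contra h
      obtain ⟨r, hr⟩ := Multiset.exists_mem_of_ne_zero h
      exact hroot ⟨r, (mem_roots hgmonic.ne_zero).mp hr⟩
    have hirr : Irreducible g :=
      (hgmonic.irreducible_iff_roots_eq_zero_of_degree_le_three
        (by omega) (by omega)).mpr hgroots
    haveI := Fact.mk hirr
    set K := AdjoinRoot g with hK
    let pb : PowerBasis F K := AdjoinRoot.powerBasis hgmonic.ne_zero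
    letI : Fintype K := Module.fintypeOfFintype pb.basis
    have hcardK : Fintype.card K = q ^ 2 := by
      rw [Module.card_eq_pow_finrank (K := F) (V := K), hcardF, pb.finrank,
        AdjoinRoot.powerBasis_dim, hgdeg]
    set α : K := AdjoinRoot.root g with hα
    have hαpow : α ^ (q ^ 2) = α := by rw [← hcardK]; exact FiniteField.pow_card α
    have haev : (Polynomial.aeval α) ((X : F[X]) ^ (q ^ 2) - X) = 0 := by
      rw [map_sub, map_pow, aeval_X, hαpow, sub_self]
    have hminpoly : minpoly F α = g :=
      (minpoly.eq_of_irreducible_of_monic hirr (by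
        rw [hα, AdjoinRoot.aeval_eq, AdjoinRoot.mk_self]) hgmonic).symm
    have hdvd : g ∣ (X : F[X]) ^ (q ^ 2) - X := by
      rw [← hminpoly]
      exact minpoly.dvd F α haev
    have hmap : g.map (algebraMap F E) = X ^ 2 + (C b * X + C c) := by
      rw [hg]
      simp only [Polynomial.map_add, Polynomial.map_mul, Polynomial.map_pow,
        Polynomial.map_C, Polynomial.map_X]
      rfl
    set P2 : E[X] := X ^ 2 + (C b * X + C c) with hP2
    have hdvd' : P2 ∣ (X : E[X]) ^ (q ^ 2) - X := by
      have h4 := Polynomial.map_dvd (algebraMap F E) hdvd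
      rwa [Polynomial.map_sub, Polynomial.map_pow, map_X, hmap] at h4
    have hQne : ((X : E[X]) ^ (q ^ 2) - X) ≠ 0 :=
      FiniteField.X_pow_card_sub_X_ne_zero E (by nlinarith)
    have hQsplits : ((X : E[X]) ^ (q ^ 2) - X).Splits := by
      rw [splits_iff_card_roots]
      have h5 := FiniteField.roots_X_pow_card_sub_X E
      rw [hE] at h5
      rw [h5, ← Finset.card_def, Finset.card_univ, hE,
        FiniteField.X_pow_card_sub_X_natDegree_eq E (by nlinarith)]
    have hsplits : P2.Splits :=
      Splits.of_dvd hQsplits hQne hdvd'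
    have hP2deg : P2.natDegree = 2 := by
      rw [← hmap, natDegree_map, hgdeg]
    have hP2ne : P2 ≠ 0 := fun h0 => by simp [h0] at hP2deg
    have hcardroots : P2.roots.card = 2 := by
      rw [splits_iff_card_roots.mp hsplits, hP2deg]
    have hne0 : P2.roots ≠ 0 := by
      intro h0; rw [h0] at hcardroots; simp at hcardroots
    obtain ⟨z, hz⟩ := Multiset.exists_mem_of_ne_zero hne0
    have hzr : P2.eval z = 0 := (mem_roots hP2ne).mp hz
    refine ⟨z, ?_⟩
    rw [hP2] at hzr
    simpa [eval_add, eval_mul, eval_pow, add_assoc] using hzr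

/-- for `L(X) = a_1 X^q + a_0 X` over `F_{q^2}`, `Tr_{q^2/q}(L(x)/x) ≠ 0`
for all nonzero `x` iff `g(X) = X^2 + Tr(a_0) X + a_1^{q+1}` has two distinct roots
in the subfield `F_q = {r : r^q = r}`. -/
theorem stmt_5 (q : ℕ) (hq : ∃ p k : ℕ, p.Prime ∧ 0 < k ∧ q = p ^ k)
    (E : Type*) [Field E] [Fintype E] (hE : Fintype.card E = q ^ 2)
    (a0 a1 : E) :
    (∀ x : E, x ≠ 0 →
        (a1 * x ^ q + a0 * x) / x + ((a1 * x ^ q + a0 * x) / x) ^ q ≠ 0)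
      ↔ ∃ r s : E, r ^ q = r ∧ s ^ q = s ∧ r ≠ s ∧
          r ^ 2 + (a0 + a0 ^ q) * r + a1 ^ (q + 1) = 0 ∧
          s ^ 2 + (a0 + a0 ^ q) * s + a1 ^ (q + 1) = 0 := by
  classical
  obtain ⟨p, k, hp, hk, hqpk⟩ := hq
  haveI hpfact := Fact.mk hp
  -- characteristic
  haveI hchar0 := ringChar.charP E
  obtain ⟨n, hrprime, hcard⟩ := FiniteField.card E (ringChar E)
  have hpr : p = ringChar E := by
    have h1 : p ∣ (ringChar E) ^ (n : ℕ) := by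
      rw [← hcard, hE, hqpk, ← pow_mul]
      exact dvd_pow_self p (by positivity)
    exact (Nat.prime_dvd_prime_iff_eq hp hrprime).mp (hp.dvd_of_dvd_pow h1)
  haveI hcharp : CharP E p := by rw [hpr]; exact hchar0
  have hq2 : 2 ≤ q := by
    rw [hqpk]
    calc 2 ≤ p := hp.two_le
      _ = p ^ 1 := (pow_one p).symm
      _ ≤ p ^ k := Nat.pow_le_pow_right hp.pos hk
  -- basic Frobenius facts
  have hfrob_add : ∀ x y : E, (x + y) ^ q = x ^ q + y ^ q := by
    intro x y; rw [hqpk]; exact add_pow_char_pow x y p k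
  have hfrob_neg : ∀ x : E, (-x) ^ q = -(x ^ q) := by
    intro x
    have h0 : (0 - x) ^ q = 0 ^ q - x ^ q := by
      rw [hqpk]; exact sub_pow_char_pow 0 x k
    simpa [zero_pow (show q ≠ 0 by omega)] using h0
  have hpowcard : ∀ x : E, x ^ (q ^ 2) = x := by
    intro x; rw [← hE]; exact FiniteField.pow_card x
  have hqq : ∀ x : E, (x ^ q) ^ q = x := by
    intro x; rw [← pow_mul, ← sq]; exact hpowcard x
  set b : E := a0 + a0 ^ q with hbdef
  set c : E := a1 ^ (q + 1) with hcdef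
  have hbF : b ^ q = b := by
    rw [hbdef, hfrob_add, hqq a0]; exact add_comm _ _
  have hcF : c ^ q = c := by
    rw [hcdef, ← pow_mul]
    have h1 : (q + 1) * q = q ^ 2 + q := by ring
    rw [h1, pow_add, hpowcard, ← pow_succ']
  have hc1 : c = a1 * a1 ^ q := by rw [hcdef, pow_succ']
  -- the key algebraic identity
  have key : ∀ x : E, x ≠ 0 →
      x ^ (q - 1) * ((a1 * x ^ q + a0 * x) / x + ((a1 * x ^ q + a0 * x) / x) ^ q)
        = a1 * (x ^ (q - 1)) ^ 2 + b * x ^ (q - 1) + a1 ^ q := by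
    intro x hx
    have hx1 : x ^ (q - 1) * x = x ^ q := by
      rw [← pow_succ]; congr 1; omega
    have hdiv : (a1 * x ^ q + a0 * x) / x = a1 * x ^ (q - 1) + a0 := by
      rw [div_eq_iff hx]
      linear_combination -a1 * hx1
    have hfq : (a1 * x ^ (q - 1) + a0) ^ q = a1 ^ q * x ^ ((q - 1) * q) + a0 ^ q := by
      rw [hfrob_add, mul_pow, ← pow_mul]
    have hxx : x ^ (q - 1) * x ^ ((q - 1) * q) = 1 := by
      rw [← pow_add]
      have e1 : q - 1 + (q - 1) * q = q ^ 2 - 1 := by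
        obtain ⟨m, rfl⟩ : ∃ m, q = m + 1 := ⟨q - 1, by omega⟩
        have e2 : (m + 1) ^ 2 = m + m * (m + 1) + 1 := by ring
        simp only [Nat.add_sub_cancel]
        rw [e2, Nat.add_sub_cancel]
      rw [e1]
      have h2 : x ^ (q ^ 2 - 1) * x = x := by
        rw [← pow_succ]
        rw [Nat.sub_add_cancel (Nat.one_le_pow 2 q (by omega)), hpowcard]
      exact mul_right_cancel₀ hx (h2.trans (one_mul x).symm)
    rw [hdiv, hfq]
    linear_combination a1 ^ q * hxx
  -- reformulation of the LHS
  have hcond : (∀ x : E, x ≠ 0 →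
      (a1 * x ^ q + a0 * x) / x + ((a1 * x ^ q + a0 * x) / x) ^ q ≠ 0)
      ↔ ∀ u : E, u ^ (q + 1) = 1 → a1 * u ^ 2 + b * u + a1 ^ q ≠ 0 := by
    constructor
    · intro h u hu h0
      have hu0 : u ≠ 0 := by
        intro h1; rw [h1, zero_pow (show q + 1 ≠ 0 by omega)] at hu
        exact one_ne_zero hu.symm
      obtain ⟨x, hx0, hxu⟩ := aux_pow_surj hq2 hE hu
      have hkey := key x hx0
      rw [hxu, h0] at hkey
      exact h x hx0 (by
        rcases mul_eq_zero.mp hkey with h2 | h2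
        · exact absurd h2 hu0
        · exact h2)
    · intro h x hx0 h0
      have hu : (x ^ (q - 1)) ^ (q + 1) = 1 := by
        rw [← pow_mul]
        have e1 : (q - 1) * (q + 1) = q ^ 2 - 1 := by
          obtain ⟨m, rfl⟩ : ∃ m, q = m + 1 := ⟨q - 1, by omega⟩
          have e2 : (m + 1) ^ 2 = m * (m + 1 + 1) + 1 := by ring
          simp only [Nat.add_sub_cancel]
          rw [e2, Nat.add_sub_cancel]
        rw [e1]
        have h2 : x ^ (q ^ 2 - 1) * x = x := by
          rw [← pow_succ]
          rw [Nat.sub_add_cancel (Nat.one_le_pow 2 q (by omega)), hpowcard]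
        exact mul_right_cancel₀ hx0 (h2.trans (one_mul x).symm)
      apply h _ hu
      rw [← key x hx0, h0, mul_zero]
  rw [hcond]
  -- now the main equivalence
  by_cases ha1 : a1 = 0
  · subst ha1
    have hczero : c = 0 := by rw [hcdef, zero_pow (show q + 1 ≠ 0 by omega)]
    have hzq : (0 : E) ^ q = 0 := zero_pow (show q ≠ 0 by omega)
    constructor
    · intro h
      have hb0 : b ≠ 0 := by
        have := h 1 (one_pow _)
        simpa [hzq] using this
      refine ⟨0, -b, hzq, ?_, ?_, ?_, ?_⟩
      · rw [hfrob_neg, hbF]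
      · intro h1; exact hb0 (neg_eq_zero.mp h1.symm)
      · rw [hczero]; ring
      · rw [hczero]; ring
    · rintro ⟨r, s, hr, hs, hrs, hre, hse⟩ u hu h0
      have hu0 : u ≠ 0 := by
        intro h1; rw [h1, zero_pow (show q + 1 ≠ 0 by omega)] at hu
        exact one_ne_zero hu.symm
      rw [hzq] at h0
      have hbu : b * u = 0 := by linear_combination h0
      have hb0 : b = 0 := by
        rcases mul_eq_zero.mp hbu with h2 | h2
        · exact h2
        · exact absurd h2 hu0
      rw [hczero, hb0] at hre hse
      have hr0 : r = 0 := by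
        have : r ^ 2 = 0 := by linear_combination hre
        exact pow_eq_zero_iff (n := 2) (by omega) |>.mp this
      have hs0 : s = 0 := by
        have : s ^ 2 = 0 := by linear_combination hse
        exact pow_eq_zero_iff (n := 2) (by omega) |>.mp this
      exact hrs (hr0.trans hs0.symm)
  · have hc0 : c ≠ 0 := by rw [hcdef]; exact pow_ne_zero _ ha1
    constructor
    · -- (⇒) contrapositive-free: construct roots or contradict
      intro h
      obtain ⟨z, hz⟩ := aux_quad_root hp hk hqpk hE hbF hcF
      have hz0 : z ≠ 0 := by
        intro h1; rw [h1] at hz; simp at hz; exact hc0 hz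
      have hw : (-b - z) ^ 2 + b * (-b - z) + c = 0 := by linear_combination hz
      have hzw : z * (-b - z) = c := by linear_combination -hz
      -- z^q is a root
      have hzq : (z ^ q) ^ 2 + b * z ^ q + c = 0 := by
        have h8 : (z ^ 2 + b * z + c) ^ q = 0 := by
          rw [hz, zero_pow (show q ≠ 0 by omega)]
        rw [hfrob_add, hfrob_add, mul_pow, hbF, hcF, ← pow_mul, mul_comm 2 q,
          pow_mul] at h8
        exact h8
      have h9 : (z ^ q - z) * (z ^ q - (-b - z)) = 0 := by
        linear_combination hzq - hz
      by_cases hzf : z ^ q = z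
      · by_cases hzw2 : z = -b - z
        · -- z = w : z^(q+1) = c, contradiction
          exfalso
          have hz1 : z ^ (q + 1) = c := by
            rw [pow_succ, hzf]  -- careful: pow_succ : z^(q+1) = z^q * z
            rw [← hzw, ← hzw2]
          set u : E := z * a1⁻¹ with hudef
          have hu1 : u ^ (q + 1) = 1 := by
            rw [hudef, mul_pow, hz1, inv_pow, ← hcdef]
            exact mul_inv_cancel₀ hc0
          apply h u hu1
          have h10 : a1 * (a1 * u ^ 2 + b * u + a1 ^ q) = z ^ 2 + b * z + c := by
            rw [hudef, hc1]
            field_simp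
          rw [hz] at h10
          rcases mul_eq_zero.mp h10 with h11 | h11
          · exact absurd h11 ha1
          · exact h11
        · -- distinct roots in F
          refine ⟨z, -b - z, hzf, ?_, hzw2, hz, hw⟩
          rw [sub_eq_add_neg, hfrob_add, hfrob_neg, hfrob_neg, hbF, hzf,
            ← sub_eq_add_neg]
      · -- z^q = w, so z^(q+1) = c : contradiction
        exfalso
        have hzqw : z ^ q = -b - z := by
          rcases mul_eq_zero.mp h9 with h11 | h11
          · exact absurd (sub_eq_zero.mp h11) hzf
          · exact sub_eq_zero.mp h11
        have hz1 : z ^ (q + 1) = c := by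
          rw [pow_succ, hzqw, mul_comm, hzw]
        set u : E := z * a1⁻¹ with hudef
        have hu1 : u ^ (q + 1) = 1 := by
          rw [hudef, mul_pow, hz1, inv_pow, ← hcdef]
          exact mul_inv_cancel₀ hc0
        apply h u hu1
        have h10 : a1 * (a1 * u ^ 2 + b * u + a1 ^ q) = z ^ 2 + b * z + c := by
          rw [hudef, hc1]
          field_simp
        rw [hz] at h10
        rcases mul_eq_zero.mp h10 with h11 | h11
        · exact absurd h11 ha1
        · exact h11
    · -- (⇐)
      rintro ⟨r, s, hr, hs, hrs, hre, hse⟩ u hu h0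
      have hu0 : u ≠ 0 := by
        intro h1; rw [h1, zero_pow (show q + 1 ≠ 0 by omega)] at hu
        exact one_ne_zero hu.symm
      have hgz : (a1 * u) ^ 2 + b * (a1 * u) + c = 0 := by
        rw [hc1]; linear_combination a1 * h0
      have hz1 : (a1 * u) ^ (q + 1) = c := by
        rw [mul_pow, hu, mul_one, hcdef]
      have h6 : (r - s) * (r + s + b) = 0 := by linear_combination hre - hse
      have h7 : r + s + b = 0 := by
        rcases mul_eq_zero.mp h6 with h11 | h11
        · exact absurd (sub_eq_zero.mp h11) hrs
        · exact h11
      have hrsc : r * s = c := by linear_combination r * h7 - hre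
      have h12 : (a1 * u - r) * (a1 * u - s) = 0 := by
        linear_combination hgz - (a1 * u) * h7 + hrsc
      rcases mul_eq_zero.mp h12 with h13 | h13
      · have heq : a1 * u = r := sub_eq_zero.mp h13
        rw [heq] at hz1
        have h14 : r ^ 2 = c := by
          rw [← hz1, pow_succ r q, hr]
          ring
        have h15 : r * (r - s) = 0 := by linear_combination h14 - hrsc
        rcases mul_eq_zero.mp h15 with h16 | h16
        · apply hc0
          rw [← h14, h16]
          ring
        · exact hrs (sub_eq_zero.mp h16)
      · have heq : a1 * u = s := sub_eq_zero.mp h13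
        rw [heq] at hz1
        have h14 : s ^ 2 = c := by
          rw [← hz1, pow_succ s q, hs]
          ring
        have h15 : s * (s - r) = 0 := by linear_combination h14 - hrsc
        rcases mul_eq_zero.mp h15 with h16 | h16
        · apply hc0
          rw [← h14, h16]
          ring
        · exact hrs (sub_eq_zero.mp h16).symm
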